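/- Let p be a prime and λ a partition of n > 0 such that the degree of the irreducible representation ρ^λ of S_n is prime to p. Then λ has a cell whose removal of a 1-hook (a corner cell) yields a partition μ of n−1 such that the degree of ρ^μ is also prime to p. -/

import Mathlib

/-- The hook length of a cell `c = (i, j)` of a Young diagram. -/
def hookLen (Y : YoungDiagram) (c : ℕ × ℕ) : ℕ :=
  (Y.rowLen c.1 - c.2) + (Y.colLen c.2 - c.1) - 1

/-- The degree of the irreducible representation of `S_n` indexed by `Y`
(`n = Y.card`), given by the hook-length formula. -/
def degIrrep (Y : YoungDiagram) : ℕ :=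
  Nat.factorial Y.card / ∏ c ∈ Y.cells, hookLen Y c

open Finset YoungDiagram Nat

namespace HookAux

/-- The β-numbers of `Y` with `m` padded rows. -/
def bfun (Y : YoungDiagram) (m i : ℕ) : ℕ := Y.rowLen i + (m - 1 - i)

lemma rowLen_pos {Y : YoungDiagram} {i : ℕ} (h : i < Y.colLen 0) : 0 < Y.rowLen i := by
  have : (i, 0) ∈ Y := mem_iff_lt_colLen.mpr h
  simpa using mem_iff_lt_rowLen.mp this

lemma colLen_pos {Y : YoungDiagram} {i j : ℕ} (h : (i, j) ∈ Y) : 0 < Y.colLen j := by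
  have : (0, j) ∈ Y := Y.up_left_mem (Nat.zero_le _) le_rfl h
  have := mem_iff_lt_colLen.mp this
  omega

lemma hook_eq {Y : YoungDiagram} {i j : ℕ} (h : (i, j) ∈ Y) :
    hookLen Y (i, j) = (Y.rowLen i - j - 1) + (Y.colLen j - i) := by
  have h1 : j < Y.rowLen i := mem_iff_lt_rowLen.mp h
  have h2 : i < Y.colLen j := mem_iff_lt_colLen.mp h
  unfold hookLen
  dsimp only
  omega

lemma hook_pos {Y : YoungDiagram} {c : ℕ × ℕ} (h : c ∈ Y) :
    0 < hookLen Y c := by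
  obtain ⟨i, j⟩ := c
  have h1 : j < Y.rowLen i := mem_iff_lt_rowLen.mp h
  have h2 : i < Y.colLen j := mem_iff_lt_colLen.mp h
  unfold hookLen
  dsimp only
  omega

lemma rowLen_eq_of {Y : YoungDiagram} {i a : ℕ} (h : ∀ j, j < a ↔ (i, j) ∈ Y) :
    Y.rowLen i = a := by
  rcases Nat.lt_trichotomy (Y.rowLen i) a with hc | hc | hc
  · exact absurd (mem_iff_lt_rowLen.mp ((h _).mp hc)) (lt_irrefl _)
  · exact hc
  · exact absurd ((h _).mpr (mem_iff_lt_rowLen.mpr hc)) (lt_irrefl _)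

lemma colLen_eq_of {Y : YoungDiagram} {j a : ℕ} (h : ∀ i, i < a ↔ (i, j) ∈ Y) :
    Y.colLen j = a := by
  rcases Nat.lt_trichotomy (Y.colLen j) a with hc | hc | hc
  · exact absurd (mem_iff_lt_colLen.mp ((h _).mp hc)) (lt_irrefl _)
  · exact hc
  · exact absurd ((h _).mpr (mem_iff_lt_colLen.mpr hc)) (lt_irrefl _)

/-- Decomposition of a product over cells into rows. -/
lemma prod_cells {M : Type*} [CommMonoid M] (Y : YoungDiagram) {m : ℕ}
    (hm : Y.colLen 0 ≤ m) (f : ℕ × ℕ → M) :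
    ∏ c ∈ Y.cells, f c = ∏ i ∈ range m, ∏ j ∈ range (Y.rowLen i), f (i, j) := by
  have hY : Y.cells = (range m).biUnion
      (fun i => (range (Y.rowLen i)).image (fun j => (i, j))) := by
    ext ⟨i, j⟩
    simp only [mem_cells, mem_biUnion, mem_range, mem_image]
    constructor
    · intro h
      refine ⟨i, ?_, j, mem_iff_lt_rowLen.mp h, rfl⟩
      have : (i, 0) ∈ Y := Y.up_left_mem le_rfl (Nat.zero_le _) h
      exact lt_of_lt_of_le (mem_iff_lt_colLen.mp this) hm
    · rintro ⟨i', _, j', hj', h⟩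
      obtain ⟨rfl, rfl⟩ := Prod.mk.injEq .. ▸ h
      cases h
      exact mem_iff_lt_rowLen.mpr hj'
  rw [hY, prod_biUnion, ]
  · refine prod_congr rfl fun i _ => ?_
    rw [prod_image]
    intro a _ b _ hab
    simpa using hab
  · intro a _ b _ hab
    simp only [Function.onFun]
    rw [disjoint_left]
    rintro ⟨x, y⟩ hx hy
    simp only [mem_image, mem_range] at hx hy
    obtain ⟨_, _, h1⟩ := hx
    obtain ⟨_, _, h2⟩ := hy
    apply hab
    cases h1
    injection h2 with h h'
    exact h.symm

lemma card_eq_sum_rowLens' (Y : YoungDiagram) {m : ℕ} (hm : Y.colLen 0 ≤ m) :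
    Y.card = ∑ i ∈ range m, Y.rowLen i := by
  classical
  have := prod_cells (M := Multiplicative ℕ) Y hm (fun _ => Multiplicative.ofAdd 1)
  -- simpler: do it with card directly
  rw [YoungDiagram.card]
  have hY : Y.cells = (range m).biUnion
      (fun i => (range (Y.rowLen i)).image (fun j => (i, j))) := by
    ext ⟨i, j⟩
    simp only [mem_cells, mem_biUnion, mem_range, mem_image]
    constructor
    · intro h
      refine ⟨i, ?_, j, mem_iff_lt_rowLen.mp h, rfl⟩
      have : (i, 0) ∈ Y := Y.up_left_mem le_rfl (Nat.zero_le _) h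
      exact lt_of_lt_of_le (mem_iff_lt_colLen.mp this) hm
    · rintro ⟨i', _, j', hj', h⟩
      cases h
      exact mem_iff_lt_rowLen.mpr hj'
  rw [hY, card_biUnion]
  · refine sum_congr rfl fun i _ => ?_
    rw [Finset.card_image_of_injective _ (fun a b hab => by simpa using hab), card_range]
  · intro a _ b hb hab
    rw [Function.onFun, disjoint_left]
    rintro ⟨x, y⟩ hx hy
    simp only [mem_image, mem_range] at hx hy
    obtain ⟨_, _, h1⟩ := hx
    obtain ⟨_, _, h2⟩ := hy
    apply hab
    cases h1
    injection h2 with h h'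
    exact h.symm

end HookAux

namespace HookAux

/-- Remove the first row of a Young diagram. -/
def peel (Y : YoungDiagram) : YoungDiagram where
  cells := (Y.cells.filter fun c => 0 < c.1).image fun c => (c.1 - 1, c.2)
  isLowerSet := by
    rintro ⟨i2, j2⟩ ⟨i1, j1⟩ ⟨hi, hj⟩ h
    simp only [coe_image, coe_filter, Set.mem_image, Set.mem_setOf_eq, mem_cells,
      Finset.mem_coe] at h ⊢
    obtain ⟨⟨a, b⟩, ⟨hab, ha⟩, heq⟩ := h
    injection heq with e1 e2
    refine ⟨(i1 + 1, j1), ⟨Y.up_left_mem ?_ ?_ hab, by simp⟩, by simp⟩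
    · omega
    · omega

lemma mem_peel {Y : YoungDiagram} {i j : ℕ} : (i, j) ∈ peel Y ↔ (i + 1, j) ∈ Y := by
  constructor
  · intro h
    rw [← mem_cells] at h
    simp only [peel, Finset.mem_image, Finset.mem_filter, mem_cells] at h
    obtain ⟨⟨a, b⟩, ⟨hab, ha⟩, heq⟩ := h
    injection heq with e1 e2
    simp only at e1 e2 ha
    have : a = i + 1 := by omega
    rw [← this, ← e2]; exact hab
  · intro h
    rw [← mem_cells]
    simp only [peel, Finset.mem_image, Finset.mem_filter, mem_cells]
    exact ⟨(i + 1, j), ⟨h, by simp⟩, by simp⟩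

lemma peel_rowLen (Y : YoungDiagram) (i : ℕ) : (peel Y).rowLen i = Y.rowLen (i + 1) :=
  rowLen_eq_of fun j => by rw [mem_peel, ← mem_iff_lt_rowLen]

lemma peel_colLen (Y : YoungDiagram) (j : ℕ) : (peel Y).colLen j = Y.colLen j - 1 :=
  colLen_eq_of fun i => by
    rw [mem_peel, mem_iff_lt_colLen]
    omega

lemma peel_hook {Y : YoungDiagram} {i j : ℕ} :
    hookLen (peel Y) (i, j) = hookLen Y (i + 1, j) := by
  unfold hookLen
  dsimp only
  rw [peel_rowLen, peel_colLen]
  omega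

end HookAux

namespace HookAux

lemma bfun_strict_anti {Y : YoungDiagram} {m j k : ℕ} (hjk : j < k) (hk : k < m) :
    bfun Y m k < bfun Y m j := by
  have h := Y.rowLen_anti j k (le_of_lt hjk)
  unfold bfun
  omega

lemma prod_Icc_one_id (n : ℕ) : ∏ x ∈ Finset.Icc 1 n, x = n ! := by
  rw [← Finset.prod_range_add_one_eq_factorial]
  rw [show Finset.Icc 1 n = (Finset.range n).image (· + 1) by
    ext x
    simp only [Finset.mem_Icc, Finset.mem_image, Finset.mem_range]
    constructor
    · rintro ⟨h1, h2⟩; exact ⟨x - 1, by omega, by omega⟩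
    · rintro ⟨a, ha, rfl⟩; omega]
  rw [Finset.prod_image (by intro a _ b _ h; simp only at h; omega)]

/-- The first-row hooks together with the first-column-type differences
partition `{1, …, b₀}`. -/
lemma row0_prod (Y : YoungDiagram) (m : ℕ) (hc : Y.colLen 0 = m + 1) :
    (∏ j ∈ Finset.range (Y.rowLen 0), hookLen Y (0, j)) *
      ∏ k ∈ Finset.range m, (bfun Y (m + 1) 0 - bfun Y (m + 1) (k + 1)) =
      (bfun Y (m + 1) 0)! := by
  set L := Y.rowLen 0 with hL
  have hb0 : bfun Y (m + 1) 0 = L + m := by unfold bfun; omega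
  set b0 := bfun Y (m + 1) 0 with hb0'
  set f1 : ℕ → ℕ := fun j => (L - j - 1) + Y.colLen j with hf1
  set f2 : ℕ → ℕ := fun k => b0 - bfun Y (m + 1) (k + 1) with hf2
  have hLpos : 0 < L := rowLen_pos (by omega)
  -- hooks of row 0
  have hhook : ∀ j ∈ Finset.range L, hookLen Y (0, j) = f1 j := by
    intro j hj
    rw [Finset.mem_range] at hj
    have hmem : (0, j) ∈ Y := mem_iff_lt_rowLen.mpr hj
    rw [hook_eq hmem]
    simp [hf1, hL]
  -- basic bounds
  have hcolpos : ∀ j < L, 0 < Y.colLen j := fun j hj => colLen_pos (mem_iff_lt_rowLen.mpr hj)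
  have hcolle : ∀ j, Y.colLen j ≤ m + 1 := fun j => hc ▸ Y.colLen_anti 0 j (Nat.zero_le _)
  have hbanti : ∀ k < m, bfun Y (m + 1) (k + 1) < b0 :=
    fun k hk => bfun_strict_anti (Nat.succ_pos k) (by omega)
  have hf1anti : ∀ x ∈ Finset.range L, ∀ y ∈ Finset.range L, x < y → f1 y < f1 x := by
    intro x hx y hy hxy
    rw [Finset.mem_range] at hx hy
    have := Y.colLen_anti x y (le_of_lt hxy)
    simp only [hf1]
    omega
  have hf2mono : ∀ x ∈ Finset.range m, ∀ y ∈ Finset.range m, x < y → f2 x < f2 y := by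
    intro x hx y hy hxy
    rw [Finset.mem_range] at hx hy
    have h1 := bfun_strict_anti (Y := Y) (m := m + 1) (show x + 1 < y + 1 by omega) (by omega)
    have h2 := hbanti y hy
    simp only [hf2]
    omega
  have inj1 : ∀ x ∈ Finset.range L, ∀ y ∈ Finset.range L, f1 x = f1 y → x = y := by
    intro x hx y hy h
    rcases Nat.lt_trichotomy x y with hl | he | hl
    · have := hf1anti x hx y hy hl; omega
    · exact he
    · have := hf1anti y hy x hx hl; omega
  have inj2 : ∀ x ∈ Finset.range m, ∀ y ∈ Finset.range m, f2 x = f2 y → x = y := by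
    intro x hx y hy h
    rcases Nat.lt_trichotomy x y with hl | he | hl
    · have := hf2mono x hx y hy hl; omega
    · exact he
    · have := hf2mono y hy x hx hl; omega
  set S := (Finset.range L).image f1 with hS
  set T := (Finset.range m).image f2 with hT
  have hScard : S.card = L := by rw [hS, Finset.card_image_iff.mpr inj1, Finset.card_range]
  have hTcard : T.card = m := by rw [hT, Finset.card_image_iff.mpr inj2, Finset.card_range]
  have hSsub : S ⊆ Finset.Icc 1 b0 := by
    intro x hx
    rw [hS, Finset.mem_image] at hx
    obtain ⟨j, hj, rfl⟩ := hx
    rw [Finset.mem_range] at hj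
    have h1 := hcolpos j hj
    have h2 := hcolle j
    rw [Finset.mem_Icc]
    simp only [hf1]
    omega
  have hTsub : T ⊆ Finset.Icc 1 b0 := by
    intro x hx
    rw [hT, Finset.mem_image] at hx
    obtain ⟨k, hk, rfl⟩ := hx
    rw [Finset.mem_range] at hk
    have := hbanti k hk
    rw [Finset.mem_Icc]
    simp only [hf2]
    omega
  have hdisj : Disjoint S T := by
    rw [Finset.disjoint_left]
    rintro x hx hx'
    rw [hS, Finset.mem_image] at hx
    rw [hT, Finset.mem_image] at hx'
    obtain ⟨j, hj, rfl⟩ := hx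
    obtain ⟨k, hk, he⟩ := hx'
    rw [Finset.mem_range] at hj hk
    have hble := hbanti k hk
    have hbval : bfun Y (m + 1) (k + 1) = Y.rowLen (k + 1) + (m - 1 - k) := by
      unfold bfun; omega
    -- he : b0 - b_{k+1} = f1 j
    have hkey : Y.colLen j + Y.rowLen (k + 1) = j + k + 2 := by
      have h1 := hcolpos j hj
      simp only [hf2] at he
      simp only [hf1] at he ⊢
      omega
    by_cases hmem : (k + 1, j) ∈ Y
    · have h1 := mem_iff_lt_colLen.mp hmem
      have h2 := mem_iff_lt_rowLen.mp hmem
      omega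
    · have h1 : ¬ (k + 1 < Y.colLen j) := fun hcon => hmem (mem_iff_lt_colLen.mpr hcon)
      have h2 : ¬ (j < Y.rowLen (k + 1)) := fun hcon => hmem (mem_iff_lt_rowLen.mpr hcon)
      omega
  have hunion : S ∪ T = Finset.Icc 1 b0 := by
    apply Finset.eq_of_subset_of_card_le (Finset.union_subset hSsub hTsub)
    rw [Finset.card_union_of_disjoint hdisj, hScard, hTcard, Nat.card_Icc]
    omega
  calc (∏ j ∈ Finset.range L, hookLen Y (0, j)) *
      ∏ k ∈ Finset.range m, (b0 - bfun Y (m + 1) (k + 1))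
      = (∏ j ∈ Finset.range L, f1 j) * ∏ k ∈ Finset.range m, f2 k := by
        rw [Finset.prod_congr rfl hhook]
    _ = (∏ x ∈ S, x) * ∏ x ∈ T, x := by rw [hS, hT, Finset.prod_image inj1, Finset.prod_image inj2]
    _ = ∏ x ∈ S ∪ T, x := (Finset.prod_union hdisj).symm
    _ = b0 ! := by rw [hunion, prod_Icc_one_id]

end HookAux

namespace HookAux

lemma bfun_peel (Y : YoungDiagram) (m i : ℕ) :
    bfun (peel Y) m i = bfun Y (m + 1) (i + 1) := by
  unfold bfun
  rw [peel_rowLen]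
  omega

lemma cells_empty_of_colLen {Y : YoungDiagram} (h : Y.colLen 0 = 0) : Y.cells = ∅ := by
  apply Finset.eq_empty_of_forall_notMem
  rintro ⟨i, j⟩ hc
  rw [mem_cells] at hc
  have := colLen_pos hc
  have h2 := Y.colLen_anti 0 j (Nat.zero_le _)
  omega

/-- Main identity A : hook products in terms of β-numbers. -/
theorem hookA : ∀ (m : ℕ) (Y : YoungDiagram), Y.colLen 0 ≤ m →
    (∏ c ∈ Y.cells, hookLen Y c) *
      (∏ k ∈ range m, ∏ j ∈ range k, (bfun Y m j - bfun Y m k)) =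
      ∏ i ∈ range m, (bfun Y m i)! := by
  intro m
  induction m with
  | zero =>
    intro Y hY
    rw [cells_empty_of_colLen (Nat.le_zero.mp hY)]
    simp
  | succ m IH =>
    intro Y hY
    rcases Nat.lt_or_ge (Y.colLen 0) (m + 1) with h | h
    · -- padding case : colLen 0 ≤ m
      have h' : Y.colLen 0 ≤ m := by omega
      have hrow : Y.rowLen m = 0 := by
        apply rowLen_eq_of
        intro j
        simp only [Nat.not_lt_zero, false_iff]
        intro hc
        have hc0 : (m, 0) ∈ Y := Y.up_left_mem le_rfl (Nat.zero_le _) hc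
        have := mem_iff_lt_colLen.mp hc0
        omega
      have hb : ∀ i < m, bfun Y (m + 1) i = bfun Y m i + 1 := by
        intro i hi; unfold bfun; omega
      have hbm : bfun Y (m + 1) m = 0 := by unfold bfun; omega
      rw [Finset.prod_range_succ (fun k => ∏ j ∈ range k, (bfun Y (m+1) j - bfun Y (m+1) k)),
          Finset.prod_range_succ (fun i => (bfun Y (m+1) i)!)]
      have e1 : ∏ k ∈ range m, ∏ j ∈ range k, (bfun Y (m+1) j - bfun Y (m+1) k) =
          ∏ k ∈ range m, ∏ j ∈ range k, (bfun Y m j - bfun Y m k) := by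
        refine Finset.prod_congr rfl fun k hk => Finset.prod_congr rfl fun j hj => ?_
        rw [Finset.mem_range] at hk hj
        rw [hb k hk, hb j (by omega)]
        omega
      have e2 : ∏ j ∈ range m, (bfun Y (m+1) j - bfun Y (m+1) m) =
          ∏ j ∈ range m, (bfun Y m j + 1) := by
        refine Finset.prod_congr rfl fun j hj => ?_
        rw [Finset.mem_range] at hj
        rw [hb j hj, hbm]
        omega
      have e3 : ∏ i ∈ range m, (bfun Y (m+1) i)! =
          ∏ i ∈ range m, ((bfun Y m i)! * (bfun Y m i + 1)) := by
        refine Finset.prod_congr rfl fun i hi => ?_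
        rw [Finset.mem_range] at hi
        rw [hb i hi, Nat.factorial_succ]
        ring
      rw [e1, e2, e3, hbm]
      rw [Finset.prod_mul_distrib]
      have := IH Y h'
      rw [Nat.factorial_zero]
      calc (∏ c ∈ Y.cells, hookLen Y c) *
            ((∏ k ∈ range m, ∏ j ∈ range k, (bfun Y m j - bfun Y m k)) *
              ∏ j ∈ range m, (bfun Y m j + 1))
          = ((∏ c ∈ Y.cells, hookLen Y c) *
              (∏ k ∈ range m, ∏ j ∈ range k, (bfun Y m j - bfun Y m k))) *
              ∏ j ∈ range m, (bfun Y m j + 1) := by ring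
        _ = (∏ i ∈ range m, (bfun Y m i)!) * ∏ j ∈ range m, (bfun Y m j + 1) := by rw [this]
        _ = (∏ i ∈ range m, (bfun Y m i)!) * (∏ j ∈ range m, (bfun Y m j + 1)) * 1 := by ring
    · -- peeling case : colLen 0 = m + 1
      have hc : Y.colLen 0 = m + 1 := le_antisymm hY h
      set Y' := peel Y with hY'
      have hc' : Y'.colLen 0 ≤ m := by rw [hY', peel_colLen]; omega
      have hIH := IH Y' hc'
      -- hook product splits
      have hsplit : ∏ c ∈ Y.cells, hookLen Y c =
          (∏ j ∈ range (Y.rowLen 0), hookLen Y (0, j)) * ∏ c ∈ Y'.cells, hookLen Y' c := by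
        rw [prod_cells Y (le_of_eq hc) (hookLen Y),
            prod_cells Y' hc' (hookLen Y'),
            Finset.prod_range_succ' (fun i => ∏ j ∈ range (Y.rowLen i), hookLen Y (i, j))]
        rw [mul_comm]
        congr 1
        refine Finset.prod_congr rfl fun i _ => ?_
        rw [peel_rowLen]
        exact Finset.prod_congr rfl fun j _ => peel_hook.symm
      -- difference product splits
      have hD : ∏ k ∈ range (m+1), ∏ j ∈ range k, (bfun Y (m+1) j - bfun Y (m+1) k) =
          (∏ k ∈ range m, ∏ j ∈ range k, (bfun Y' m j - bfun Y' m k)) *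
            ∏ k ∈ range m, (bfun Y (m+1) 0 - bfun Y (m+1) (k+1)) := by
        rw [Finset.prod_range_succ' (fun k => ∏ j ∈ range k, (bfun Y (m+1) j - bfun Y (m+1) k))]
        simp only [Finset.range_zero, Finset.prod_empty, mul_one]
        rw [← Finset.prod_mul_distrib]
        refine Finset.prod_congr rfl fun k hk => ?_
        rw [Finset.prod_range_succ' (fun j => (bfun Y (m+1) j - bfun Y (m+1) (k+1)))]
        congr 1
        refine Finset.prod_congr rfl fun j _ => ?_
        rw [bfun_peel, bfun_peel]
      -- factorial product splits
      have hF : ∏ i ∈ range (m+1), (bfun Y (m+1) i)! =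
          (∏ i ∈ range m, (bfun Y' m i)!) * (bfun Y (m+1) 0)! := by
        rw [Finset.prod_range_succ' (fun i => (bfun Y (m+1) i)!)]
        congr 1
        exact Finset.prod_congr rfl fun i _ => by rw [bfun_peel]
      rw [hsplit, hD, hF]
      calc ((∏ j ∈ range (Y.rowLen 0), hookLen Y (0, j)) * ∏ c ∈ Y'.cells, hookLen Y' c) *
            ((∏ k ∈ range m, ∏ j ∈ range k, (bfun Y' m j - bfun Y' m k)) *
              ∏ k ∈ range m, (bfun Y (m+1) 0 - bfun Y (m+1) (k+1)))
          = ((∏ c ∈ Y'.cells, hookLen Y' c) *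
              (∏ k ∈ range m, ∏ j ∈ range k, (bfun Y' m j - bfun Y' m k))) *
            ((∏ j ∈ range (Y.rowLen 0), hookLen Y (0, j)) *
              ∏ k ∈ range m, (bfun Y (m+1) 0 - bfun Y (m+1) (k+1))) := by ring
        _ = (∏ i ∈ range m, (bfun Y' m i)!) * (bfun Y (m+1) 0)! := by
            rw [hIH, row0_prod Y m hc]

end HookAux

namespace HookAux
open Polynomial Lagrange

lemma nodal_coeff_top (v : ℕ → ℚ) : ∀ (s : Finset ℕ), s.Nonempty →
    (nodal s v).coeff (s.card - 1) = -∑ i ∈ s, v i := by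
  intro s
  induction s using Finset.cons_induction with
  | empty => rintro ⟨x, hx⟩; exact absurd hx (Finset.notMem_empty x)
  | cons a s ha IH =>
    intro _
    rcases s.eq_empty_or_nonempty with rfl | hs
    · simp [nodal]
    · rw [Finset.cons_eq_insert, nodal_insert_eq_nodal ha, Finset.card_insert_of_notMem ha,
        Finset.sum_insert ha]
      have hcard : s.card + 1 - 1 = (s.card - 1) + 1 := by
        have := Finset.card_pos.mpr hs; omega
      rw [hcard, sub_mul, coeff_sub, coeff_X_mul, coeff_C_mul]
      have h1 : (nodal s v).coeff ((s.card - 1) + 1) = 1 := by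
        have hc2 : (s.card - 1) + 1 = (nodal s v).natDegree := by
          rw [natDegree_nodal]; have := Finset.card_pos.mpr hs; omega
        rw [hc2]
        exact nodal_monic.coeff_natDegree
      rw [h1, IH hs]
      ring

lemma interpolate_coeff_top (s : Finset ℕ) (v r : ℕ → ℚ) :
    (interpolate s v r).coeff (s.card - 1) = ∑ i ∈ s, r i * nodalWeight s v i := by
  rw [interpolate_apply, finset_sum_coeff]
  refine Finset.sum_congr rfl fun i hi => ?_
  rw [basis_eq_prod_sub_inv_mul_nodal_div hi, ← nodal_erase_eq_nodal_div hi, ← mul_assoc, ← C_mul,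
    coeff_C_mul]
  have h1 : (nodal (s.erase i) v).coeff (s.card - 1) = 1 := by
    have hc : s.card - 1 = (nodal (s.erase i) v).natDegree := by
      rw [natDegree_nodal, Finset.card_erase_of_mem hi]
    rw [hc]
    exact nodal_monic.coeff_natDegree
  rw [h1, mul_one]

lemma hasse_eval (q : ℚ[X]) (k : ℕ) (x : ℚ) (N : ℕ) (hN : q.natDegree - k < N) :
    (hasseDeriv k q).eval x = ∑ n ∈ Finset.range N, ((n + k).choose k : ℚ) * q.coeff (n + k) * x ^ n := by
  rw [eval_eq_sum_range' (lt_of_le_of_lt (natDegree_hasseDeriv_le q k) hN)]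
  exact Finset.sum_congr rfl fun n _ => by rw [hasseDeriv_coeff]

/-- The key rational-function identity behind the branching rule. -/
theorem lagB (s : Finset ℕ) (v : ℕ → ℚ) (hinj : Set.InjOn v s) :
    ∑ i ∈ s, (v i * ∏ k ∈ s.erase i, (v i - 1 - v k)) * (∏ k ∈ s.erase i, (v i - v k))⁻¹ =
      (∑ i ∈ s, v i) - (s.card.choose 2 : ℚ) := by
  rcases Nat.lt_or_ge s.card 2 with hs | hs
  · interval_cases h : s.card
    · rw [Finset.card_eq_zero.mp h]; simp
    · obtain ⟨a, rfl⟩ := Finset.card_eq_one.mp h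
      simp
  -- main case : at least two nodes
  obtain ⟨M, hm⟩ : ∃ M, s.card = M + 2 := ⟨s.card - 2, by omega⟩
  have hne : s.Nonempty := Finset.card_pos.mp (by omega)
  set g := nodal s v with hg
  have hgdeg : g.natDegree = M + 2 := by rw [hg, natDegree_nodal, hm]
  have hgmon : g.Monic := nodal_monic
  have hgtop : g.coeff (M + 2) = 1 := by rw [← hgdeg]; exact hgmon.coeff_natDegree
  have hgzero : ∀ k, M + 2 < k → g.coeff k = 0 := fun k hk =>
    coeff_eq_zero_of_natDegree_lt (by omega)
  set G := taylor (-1 : ℚ) g with hG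
  have hGdeg : G.natDegree = M + 2 := by rw [hG, natDegree_taylor, hgdeg]
  have hGtop : G.coeff (M + 2) = 1 := by
    rw [hG, taylor_coeff, hasse_eval g (M + 2) (-1) 1 (by omega)]
    rw [Finset.sum_range_one]
    simp only [zero_add]
    rw [hgtop, Nat.choose_self]
    norm_num
  have hGm1 : G.coeff (M + 1) = g.coeff (M + 1) - (M + 2 : ℚ) := by
    rw [hG, taylor_coeff, hasse_eval g (M + 1) (-1) 2 (by omega)]
    rw [Finset.sum_range_succ, Finset.sum_range_one]
    have h1 : (1 + (M + 1)).choose (M + 1) = M + 2 := by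
      rw [show 1 + (M + 1) = (M + 1) + 1 by ring, Nat.choose_succ_self_right]
    have h2 : 1 + (M + 1) = M + 2 := by ring
    simp only [zero_add]
    rw [h1, h2, hgtop, Nat.choose_self]
    push_cast
    ring
  have hGm2 : G.coeff M = g.coeff M - (M + 1 : ℚ) * g.coeff (M + 1) + ((M + 2).choose 2 : ℚ) := by
    rw [hG, taylor_coeff, hasse_eval g M (-1) 3 (by omega)]
    rw [Finset.sum_range_succ, Finset.sum_range_succ, Finset.sum_range_one]
    have h1 : (1 + M).choose M = M + 1 := by
      rw [show 1 + M = M + 1 by ring, Nat.choose_succ_self_right]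
    have h2 : (2 + M).choose M = (M + 2).choose 2 := by
      rw [show 2 + M = M + 2 by ring]
      rw [show M = (M + 2) - 2 by omega]
      exact Nat.choose_symm (by omega)
    simp only [zero_add]
    rw [h1, h2, show (2 : ℕ) + M = M + 2 by ring, show (1 : ℕ) + M = M + 1 by ring, hgtop,
      Nat.choose_self]
    push_cast
    ring
  set c : ℚ := ((M : ℚ) + 2) with hc
  set f := X * G - (X - C c) * g with hf
  have hfco : ∀ k, M + 2 ≤ k → f.coeff k = 0 := by
    intro k hk
    obtain ⟨k', rfl⟩ : ∃ k', k = k' + 1 := ⟨k - 1, by omega⟩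
    rw [hf, coeff_sub, coeff_X_mul, sub_mul, coeff_sub, coeff_X_mul, coeff_C_mul]
    rcases Nat.lt_trichotomy k' (M + 2) with h | h | h
    · have hk' : k' = M + 1 := by omega
      rw [hk', hGm1, hgtop, hc]
      ring
    · rw [h, hGtop, hgtop, hgzero (M + 3) (by omega)]
      ring
    · rw [hgzero k' (by omega), hgzero (k' + 1) (by omega),
        coeff_eq_zero_of_natDegree_lt (by omega : G.natDegree < k')]
      ring
  have hdegf : f.degree < (s.card : ℕ) := by
    rw [degree_lt_iff_coeff_zero]
    intro k hk
    exact hfco k (by omega)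
  have hinterp : interpolate s v (fun i => (X * G).eval (v i)) = f := by
    rw [eq_interpolate hinj hdegf]
    apply interpolate_eq_of_values_eq_on
    intro i hi
    rw [hf, hg, eval_sub, eval_mul (p := X - C c), eval_nodal_at_node hi, mul_zero, sub_zero]
  have hmain : ∑ i ∈ s, (X * G).eval (v i) * nodalWeight s v i = f.coeff (s.card - 1) := by
    rw [← hinterp, interpolate_coeff_top]
  have hfcoeff : f.coeff (s.card - 1) = g.coeff (M + 1) + ((M + 2).choose 2 : ℚ) := by
    rw [show s.card - 1 = M + 1 by omega, hf, coeff_sub, coeff_X_mul, sub_mul, coeff_sub,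
      coeff_X_mul, coeff_C_mul, hGm2, hc]
    ring
  have hgm1 : g.coeff (M + 1) = -∑ i ∈ s, v i := by
    have := nodal_coeff_top v s hne
    rw [hm] at this
    simpa using this
  have heval : ∀ i ∈ s, (X * G).eval (v i) = -(v i * ∏ k ∈ s.erase i, (v i - 1 - v k)) := by
    intro i hi
    rw [eval_mul, eval_X, hG, taylor_eval, hg, eval_nodal]
    have hsplit : ∏ j ∈ s, (v i + -1 - v j) = (v i + -1 - v i) * ∏ j ∈ s.erase i, (v i + -1 - v j) :=
      (Finset.mul_prod_erase s _ hi).symm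
    rw [hsplit]
    have : ∀ j, v i + -1 - v j = v i - 1 - v j := fun j => by ring
    simp only [this]
    ring
  have hW : ∀ i, nodalWeight s v i = (∏ k ∈ s.erase i, (v i - v k))⁻¹ := by
    intro i
    rw [nodalWeight, ← Finset.prod_inv_distrib]
  calc ∑ i ∈ s, (v i * ∏ k ∈ s.erase i, (v i - 1 - v k)) * (∏ k ∈ s.erase i, (v i - v k))⁻¹
      = -∑ i ∈ s, (X * G).eval (v i) * nodalWeight s v i := by
        rw [← Finset.sum_neg_distrib]
        refine Finset.sum_congr rfl fun i hi => ?_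
        rw [heval i hi, hW i]
        ring
    _ = -(g.coeff (M + 1) + ((M + 2).choose 2 : ℚ)) := by rw [hmain, hfcoeff]
    _ = (∑ i ∈ s, v i) - (s.card.choose 2 : ℚ) := by
        rw [hgm1, hm]
        ring

end HookAux

namespace HookAux

/-- Remove the corner cell at the end of row `r` (junk value `Y` itself if not a corner). -/
def rmCorner (Y : YoungDiagram) (r : ℕ) : YoungDiagram where
  cells := if Y.rowLen (r + 1) < Y.rowLen r then Y.cells.erase (r, Y.rowLen r - 1) else Y.cells
  isLowerSet := by
    split_ifs with hcond
    · rintro ⟨i2, j2⟩ ⟨i1, j1⟩ ⟨hi, hj⟩ h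
      simp only [Finset.coe_erase, Set.mem_diff, Finset.mem_coe, mem_cells,
        Set.mem_singleton_iff] at h ⊢
      obtain ⟨hmem, hne⟩ := h
      refine ⟨Y.up_left_mem hi hj hmem, ?_⟩
      intro heq
      injection heq with e1 e2
      simp only at hi hj
      have hL : 0 < Y.rowLen r := by omega
      have h1 : j2 < Y.rowLen i2 := mem_iff_lt_rowLen.mp hmem
      have h2 : Y.rowLen i2 ≤ Y.rowLen r := Y.rowLen_anti r i2 (by omega)
      have hj2 : j2 = Y.rowLen r - 1 := by omega
      have hi2 : i2 = r := by
        by_contra hne2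
        have h3 : Y.rowLen i2 ≤ Y.rowLen (r + 1) := Y.rowLen_anti (r + 1) i2 (by omega)
        omega
      exact hne (by rw [hi2, hj2])
    · exact Y.isLowerSet

variable {Y : YoungDiagram} {r : ℕ}

lemma rmCorner_cells (hcond : Y.rowLen (r + 1) < Y.rowLen r) :
    (rmCorner Y r).cells = Y.cells.erase (r, Y.rowLen r - 1) := by
  simp [rmCorner, hcond]

lemma rmCorner_subset (hcond : Y.rowLen (r + 1) < Y.rowLen r) :
    (rmCorner Y r).cells ⊆ Y.cells := by
  rw [rmCorner_cells hcond]; exact Finset.erase_subset _ _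

lemma corner_mem (hcond : Y.rowLen (r + 1) < Y.rowLen r) :
    (r, Y.rowLen r - 1) ∈ Y.cells := by
  rw [mem_cells, mem_iff_lt_rowLen]; omega

lemma rmCorner_card (hcond : Y.rowLen (r + 1) < Y.rowLen r) :
    (rmCorner Y r).card = Y.card - 1 := by
  rw [YoungDiagram.card, YoungDiagram.card, rmCorner_cells hcond,
    Finset.card_erase_of_mem (corner_mem hcond)]

lemma rmCorner_mem (hcond : Y.rowLen (r + 1) < Y.rowLen r) {i j : ℕ} :
    (i, j) ∈ rmCorner Y r ↔ (i, j) ∈ Y ∧ (i, j) ≠ (r, Y.rowLen r - 1) := by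
  rw [← mem_cells, rmCorner_cells hcond, Finset.mem_erase, mem_cells, and_comm]

lemma rmCorner_rowLen_ne (hcond : Y.rowLen (r + 1) < Y.rowLen r) {i : ℕ} (hi : i ≠ r) :
    (rmCorner Y r).rowLen i = Y.rowLen i := by
  apply rowLen_eq_of
  intro j
  rw [rmCorner_mem hcond]
  constructor
  · intro hj
    exact ⟨mem_iff_lt_rowLen.mpr hj, by simp [hi]⟩
  · rintro ⟨hmem, -⟩
    exact mem_iff_lt_rowLen.mp hmem

lemma rmCorner_rowLen_eq (hcond : Y.rowLen (r + 1) < Y.rowLen r) :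
    (rmCorner Y r).rowLen r = Y.rowLen r - 1 := by
  apply rowLen_eq_of
  intro j
  rw [rmCorner_mem hcond]
  constructor
  · intro hj
    refine ⟨mem_iff_lt_rowLen.mpr (by omega), ?_⟩
    simp only [ne_eq, Prod.mk.injEq, true_and]
    omega
  · rintro ⟨hmem, hne⟩
    have := mem_iff_lt_rowLen.mp hmem
    simp only [ne_eq, Prod.mk.injEq, true_and] at hne
    omega

lemma rmCorner_colLen_le (hcond : Y.rowLen (r + 1) < Y.rowLen r) (j : ℕ) :
    (rmCorner Y r).colLen j ≤ Y.colLen j := by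
  by_contra hcon
  push_neg at hcon
  have h1 : (Y.colLen j, j) ∈ rmCorner Y r := mem_iff_lt_colLen.mpr hcon
  have h2 := ((rmCorner_mem hcond).mp h1).1
  have := mem_iff_lt_colLen.mp h2
  omega

end HookAux

namespace HookAux

/-- The Vandermonde-type product of differences. -/
noncomputable def DDq (m : ℕ) (u : ℕ → ℚ) : ℚ :=
  ∏ k ∈ Finset.range m, ∏ j ∈ Finset.range k, (u j - u k)

lemma DDq_cast (m : ℕ) (b : ℕ → ℕ) (hb : ∀ j k, j < k → k < m → b k ≤ b j) :
    ((∏ k ∈ Finset.range m, ∏ j ∈ Finset.range k, (b j - b k) : ℕ) : ℚ) =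
      DDq m (fun i => (b i : ℚ)) := by
  rw [DDq, Nat.cast_prod]
  refine Finset.prod_congr rfl fun k hk => ?_
  rw [Nat.cast_prod]
  refine Finset.prod_congr rfl fun j hj => ?_
  rw [Finset.mem_range] at hk hj
  rw [Nat.cast_sub (hb j k hj hk)]

/-- Product over "pairs involving `r`" as a product over the erased range. -/
lemma prod_pairs_r {m r : ℕ} (hr : r < m) (w : ℕ → ℚ) :
    ∏ x ∈ ((Finset.range m).sigma fun k => Finset.range k).filter
        (fun x => x.1 = r ∨ x.2 = r), (w x.2 - w x.1) =
      ∏ k ∈ (Finset.range m).erase r, (if k < r then w k - w r else w r - w k) := by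
  apply Finset.prod_nbij' (i := fun x => if x.1 = r then x.2 else x.1)
    (j := fun k => if k < r then (⟨r, k⟩ : Σ _ : ℕ, ℕ) else ⟨k, r⟩)
  · rintro ⟨a, b⟩ hx
    simp only [Finset.mem_filter, Finset.mem_sigma, Finset.mem_range] at hx
    obtain ⟨⟨ha, hba⟩, hor⟩ := hx
    rcases hor with h | h
    · subst h
      rw [if_pos rfl]
      simp only [Finset.mem_erase, Finset.mem_range]
      omega
    · have hne : a ≠ r := by omega
      rw [if_neg hne]
      simp only [Finset.mem_erase, Finset.mem_range]
      omega
  · intro k hk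
    simp only [Finset.mem_erase, Finset.mem_range] at hk
    by_cases h : k < r
    · rw [if_pos h]
      simp only [Finset.mem_filter, Finset.mem_sigma, Finset.mem_range]
      exact ⟨⟨hr, h⟩, by simp⟩
    · rw [if_neg h]
      simp only [Finset.mem_filter, Finset.mem_sigma, Finset.mem_range]
      exact ⟨⟨hk.2, by omega⟩, by simp⟩
  · rintro ⟨a, b⟩ hx
    simp only [Finset.mem_filter, Finset.mem_sigma, Finset.mem_range] at hx
    obtain ⟨⟨ha, hba⟩, hor⟩ := hx
    rcases hor with h | h
    · subst h
      rw [if_pos rfl, if_pos hba]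
    · subst h
      have hne : a ≠ b := by omega
      rw [if_neg hne, if_neg (by omega : ¬ a < b)]
  · intro k hk
    simp only [Finset.mem_erase, Finset.mem_range] at hk
    by_cases h : k < r
    · rw [if_pos h]
      simp
    · rw [if_neg h]
      simp [hk.1]
  · rintro ⟨a, b⟩ hx
    simp only [Finset.mem_filter, Finset.mem_sigma, Finset.mem_range] at hx
    obtain ⟨⟨ha, hba⟩, hor⟩ := hx
    rcases hor with h | h
    · subst h
      rw [if_pos rfl, if_pos hba]
    · subst h
      have hne : a ≠ b := by omega
      rw [if_neg hne, if_neg (by omega : ¬ a < b)]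

lemma DDq_sigma (m : ℕ) (u : ℕ → ℚ) :
    DDq m u = ∏ x ∈ (Finset.range m).sigma (fun k => Finset.range k), (u x.2 - u x.1) := by
  rw [DDq, Finset.prod_sigma]

/-- How the difference product changes when `u r` is decreased by 1. -/
lemma DD_update {m r : ℕ} (hr : r < m) (u u' : ℕ → ℚ)
    (hagree : ∀ i, i ≠ r → u' i = u i) (hur : u' r = u r - 1) :
    DDq m u' * ∏ k ∈ (Finset.range m).erase r, (u r - u k) =
      DDq m u * ∏ k ∈ (Finset.range m).erase r, (u r - 1 - u k) := by
  have hsplit : ∀ w : ℕ → ℚ, DDq m w =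
      (∏ x ∈ ((Finset.range m).sigma fun k => Finset.range k).filter
          (fun x => x.1 = r ∨ x.2 = r), (w x.2 - w x.1)) *
      ∏ x ∈ ((Finset.range m).sigma fun k => Finset.range k).filter
          (fun x => ¬(x.1 = r ∨ x.2 = r)), (w x.2 - w x.1) := by
    intro w
    rw [DDq_sigma, Finset.prod_filter_mul_prod_filter_not]
  have hoff : ∏ x ∈ ((Finset.range m).sigma fun k => Finset.range k).filter
      (fun x => ¬(x.1 = r ∨ x.2 = r)), (u' x.2 - u' x.1) =
      ∏ x ∈ ((Finset.range m).sigma fun k => Finset.range k).filter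
      (fun x => ¬(x.1 = r ∨ x.2 = r)), (u x.2 - u x.1) := by
    refine Finset.prod_congr rfl fun x hx => ?_
    simp only [Finset.mem_filter] at hx
    push_neg at hx
    rw [hagree _ hx.2.1, hagree _ hx.2.2]
  have key : (∏ k ∈ (Finset.range m).erase r, (if k < r then u' k - u' r else u' r - u' k)) *
      ∏ k ∈ (Finset.range m).erase r, (u r - u k) =
      (∏ k ∈ (Finset.range m).erase r, (if k < r then u k - u r else u r - u k)) *
      ∏ k ∈ (Finset.range m).erase r, (u r - 1 - u k) := by
    rw [← Finset.prod_mul_distrib, ← Finset.prod_mul_distrib]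
    refine Finset.prod_congr rfl fun k hk => ?_
    simp only [Finset.mem_erase] at hk
    rw [hagree k hk.1, hur]
    by_cases h : k < r
    · rw [if_pos h, if_pos h]
      ring
    · rw [if_neg h, if_neg h]
      ring
  rw [hsplit u', hsplit u, hoff, prod_pairs_r hr, prod_pairs_r hr]
  rw [mul_right_comm, key]
  ring

end HookAux

namespace HookAux

/-- The rows whose last cell is a removable corner. -/
def corners (Y : YoungDiagram) : Finset ℕ :=
  (Finset.range (Y.colLen 0)).filter fun r => Y.rowLen (r + 1) < Y.rowLen r

def Hprod (Y : YoungDiagram) : ℕ := ∏ c ∈ Y.cells, hookLen Y c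

lemma Hprod_pos (Y : YoungDiagram) : 0 < Hprod Y :=
  Finset.prod_pos fun c hc => hook_pos ((mem_cells c).mp hc)

lemma rowLen_zero_of {Y : YoungDiagram} {i : ℕ} (h : Y.colLen 0 ≤ i) : Y.rowLen i = 0 := by
  apply rowLen_eq_of
  intro j
  simp only [Nat.not_lt_zero, false_iff]
  intro hc
  have := mem_iff_lt_colLen.mp (Y.up_left_mem le_rfl (Nat.zero_le _) hc)
  omega

lemma colLen_pos_of_card {Y : YoungDiagram} (hn : 0 < Y.card) : 0 < Y.colLen 0 := by
  obtain ⟨⟨i, j⟩, hc⟩ := Finset.card_pos.mp hn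
  exact colLen_pos (Y.up_left_mem le_rfl (Nat.zero_le j) (((mem_cells (i, j))).mp hc))

theorem branchQ (Y : YoungDiagram) (hn : 0 < Y.card) :
    ((Y.card)! : ℚ) / (Hprod Y : ℚ) =
      ∑ r ∈ corners Y, (((Y.card - 1)! : ℚ) / (Hprod (rmCorner Y r) : ℚ)) := by
  set n := Y.card with hnn
  set m := Y.colLen 0 with hmm
  have hm : 0 < m := colLen_pos_of_card hn
  set b : ℕ → ℕ := bfun Y m with hb
  set v : ℕ → ℚ := fun i => (b i : ℚ) with hv
  have hbanti : ∀ j k, j < k → k < m → b k < b j := fun j k h1 h2 => bfun_strict_anti h1 h2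
  have hbpos : ∀ i, i < m → 0 < b i := by
    intro i hi
    have := rowLen_pos (hmm ▸ hi)
    simp only [hb]
    unfold bfun
    omega
  -- identity A for Y, in ℚ
  have hA : (Hprod Y : ℚ) * DDq m v = ∏ i ∈ Finset.range m, ((b i)! : ℚ) := by
    have h0 := hookA m Y le_rfl
    rw [hv, hb]
    rw [← DDq_cast m (bfun Y m) (fun j k h1 h2 => le_of_lt (bfun_strict_anti h1 h2))]
    unfold Hprod
    exact_mod_cast h0
  set BF : ℚ := ∏ i ∈ Finset.range m, ((b i)! : ℚ) with hBF
  have hBF0 : BF ≠ 0 := by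
    rw [hBF]
    apply Finset.prod_ne_zero_iff.mpr
    intro i _
    exact_mod_cast Nat.factorial_pos (b i) |>.ne'
  have hDD0 : DDq m v ≠ 0 := by
    rw [← DDq_cast m b (fun j k h1 h2 => le_of_lt (hbanti j k h1 h2))]
    have hpos : 0 < ∏ k ∈ Finset.range m, ∏ j ∈ Finset.range k, (b j - b k) := by
      apply Finset.prod_pos
      intro k hk
      apply Finset.prod_pos
      intro j hj
      rw [Finset.mem_range] at hk hj
      have := hbanti j k hj hk
      omega
    exact_mod_cast hpos.ne'
  have hH0 : (Hprod Y : ℚ) ≠ 0 := by exact_mod_cast (Hprod_pos Y).ne'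
  have hHinv : (Hprod Y : ℚ)⁻¹ = DDq m v / BF := by
    rw [eq_div_iff hBF0, ← hA]
    field_simp
  -- the summand functions
  set T : ℕ → ℚ := fun r =>
    (v r * ∏ k ∈ (Finset.range m).erase r, (v r - 1 - v k)) *
      (∏ k ∈ (Finset.range m).erase r, (v r - v k))⁻¹ with hT
  -- per-corner evaluation
  have hterm : ∀ r ∈ corners Y, ((n - 1)! : ℚ) / (Hprod (rmCorner Y r) : ℚ) =
      (((n - 1)! : ℚ) * DDq m v / BF) * T r := by
    intro r hrc
    simp only [corners, Finset.mem_filter, Finset.mem_range] at hrc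
    obtain ⟨hrm, hcond⟩ := hrc
    set Z := rmCorner Y r with hZ
    set bZ : ℕ → ℕ := bfun Z m with hbZ
    set vZ : ℕ → ℚ := fun i => (bZ i : ℚ) with hvZ
    have hbZanti : ∀ j k, j < k → k < m → bZ k < bZ j := fun j k h1 h2 => bfun_strict_anti h1 h2
    have hAZ : (Hprod Z : ℚ) * DDq m vZ = ∏ i ∈ Finset.range m, ((bZ i)! : ℚ) := by
      have h0 := hookA m Z (le_trans (rmCorner_colLen_le hcond 0) (le_of_eq hmm.symm))
      rw [hvZ, hbZ]
      rw [← DDq_cast m (bfun Z m) (fun j k h1 h2 => le_of_lt (bfun_strict_anti h1 h2))]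
      unfold Hprod
      exact_mod_cast h0
    set BFZ : ℚ := ∏ i ∈ Finset.range m, ((bZ i)! : ℚ) with hBFZ
    have hBFZ0 : BFZ ≠ 0 := by
      rw [hBFZ]
      apply Finset.prod_ne_zero_iff.mpr
      intro i _
      exact_mod_cast Nat.factorial_pos (bZ i) |>.ne'
    have hDDZ0 : DDq m vZ ≠ 0 := by
      rw [← DDq_cast m bZ (fun j k h1 h2 => le_of_lt (hbZanti j k h1 h2))]
      have hpos : 0 < ∏ k ∈ Finset.range m, ∏ j ∈ Finset.range k, (bZ j - bZ k) := by
        apply Finset.prod_pos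
        intro k hk
        apply Finset.prod_pos
        intro j hj
        rw [Finset.mem_range] at hk hj
        have := hbZanti j k hj hk
        omega
      exact_mod_cast hpos.ne'
    have hHZ0 : (Hprod Z : ℚ) ≠ 0 := by exact_mod_cast (Hprod_pos Z).ne'
    have hHZinv : (Hprod Z : ℚ)⁻¹ = DDq m vZ / BFZ := by
      rw [eq_div_iff hBFZ0, ← hAZ]
      field_simp
    -- relations between Z-data and Y-data
    have hbZne : ∀ i, i ≠ r → bZ i = b i := by
      intro i hi
      simp only [hbZ, hb]
      unfold bfun
      rw [rmCorner_rowLen_ne hcond hi]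
    have hrpos : 0 < Y.rowLen r := rowLen_pos (hmm ▸ hrm)
    have hbZr : bZ r = b r - 1 := by
      simp only [hbZ, hb]
      unfold bfun
      rw [rmCorner_rowLen_eq hcond]
      omega
    have hvagree : ∀ i, i ≠ r → vZ i = v i := by
      intro i hi
      simp only [hvZ, hv, hbZne i hi]
    have hvr : vZ r = v r - 1 := by
      simp only [hvZ, hv, hbZr]
      have := hbpos r hrm
      push_cast [Nat.cast_sub (by omega : 1 ≤ b r)]
      ring
    have hvr0 : v r ≠ 0 := by
      have := hbpos r hrm
      simp only [hv]
      exact_mod_cast this.ne'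
    have hPd0 : (∏ k ∈ (Finset.range m).erase r, (v r - v k)) ≠ 0 := by
      apply Finset.prod_ne_zero_iff.mpr
      intro k hk
      simp only [Finset.mem_erase, Finset.mem_range] at hk
      have : b k ≠ b r := by
        rcases Nat.lt_trichotomy k r with h | h | h
        · exact (hbanti k r h hrm).ne'
        · exact absurd h hk.1
        · exact (hbanti r k h hk.2).ne
      simp only [hv, sub_ne_zero]
      exact_mod_cast Ne.symm this
    have hBFrel : BFZ * v r = BF := by
      rw [hBFZ, hBF, ← Finset.prod_erase_mul _ _ (Finset.mem_range.mpr hrm),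
        ← Finset.prod_erase_mul _ _ (Finset.mem_range.mpr hrm)]
      have h1 : ∀ i ∈ (Finset.range m).erase r, ((bZ i)! : ℚ) = ((b i)! : ℚ) := by
        intro i hi
        rw [hbZne i (Finset.mem_erase.mp hi).1]
      rw [Finset.prod_congr rfl h1, mul_assoc]
      congr 1
      rw [hbZr]
      have hb1 : 1 ≤ b r := hbpos r hrm
      have := Nat.mul_factorial_pred (hbpos r hrm).ne'
      simp only [hv]
      exact_mod_cast by rw [mul_comm]; exact this
    have hDDrel := DD_update hrm v vZ hvagree hvr
    -- assemble
    rw [div_eq_mul_inv, hHZinv]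
    rw [div_eq_mul_inv, hT]
    have hBFZval : BFZ = BF * (v r)⁻¹ := by
      rw [← hBFrel]
      field_simp
    have hDDZval : DDq m vZ = DDq m v *
        (∏ k ∈ (Finset.range m).erase r, (v r - 1 - v k)) *
        (∏ k ∈ (Finset.range m).erase r, (v r - v k))⁻¹ := by
      have := hDDrel
      field_simp at this ⊢
      linarith [this]
    rw [hDDZval, hBFZval]
    field_simp
  -- non-corner rows contribute zero
  have hTzero : ∀ r ∈ Finset.range m, r ∉ corners Y → T r = 0 := by
    intro r hr hnc
    rw [Finset.mem_range] at hr
    simp only [corners, Finset.mem_filter, Finset.mem_range] at hnc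
    have hcond : ¬ Y.rowLen (r + 1) < Y.rowLen r := fun hc => hnc ⟨hr, hc⟩
    have heq : Y.rowLen (r + 1) = Y.rowLen r :=
      le_antisymm (Y.rowLen_anti r (r + 1) (by omega)) (by omega)
    have hr1 : r + 1 < m := by
      by_contra hc
      have h0 : Y.rowLen (r + 1) = 0 := rowLen_zero_of (by omega)
      have := rowLen_pos (hmm ▸ hr)
      omega
    have hmem : r + 1 ∈ (Finset.range m).erase r := by
      simp only [Finset.mem_erase, Finset.mem_range]
      omega
    have hzero : v r - 1 - v (r + 1) = 0 := by
      have hb1 : b r = b (r + 1) + 1 := by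
        simp only [hb]
        unfold bfun
        omega
      simp only [hv, hb1]
      push_cast
      ring
    rw [hT]
    simp only
    rw [Finset.prod_eq_zero hmem hzero]
    simp
  -- sum over corners = sum over range m
  have hsum1 : ∑ r ∈ corners Y, T r = ∑ r ∈ Finset.range m, T r := by
    apply Finset.sum_subset
    · intro r hr
      simp only [corners, Finset.mem_filter] at hr
      exact hr.1
    · exact hTzero
  -- apply the Lagrange identity
  have hinj : Set.InjOn v (Finset.range m) := by
    intro x hx y hy hxy
    simp only [Finset.coe_range, Set.mem_Iio] at hx hy
    rcases Nat.lt_trichotomy x y with h | h | h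
    · have := hbanti x y h hy
      simp only [hv] at hxy
      exfalso
      exact absurd hxy (by exact_mod_cast this.ne')
    · exact h
    · have := hbanti y x h hx
      simp only [hv] at hxy
      exfalso
      exact absurd hxy (by exact_mod_cast this.ne)
  have hlag := lagB (Finset.range m) v hinj
  rw [Finset.card_range] at hlag
  -- sum of β-numbers
  have hsumb : ∑ i ∈ Finset.range m, b i = n + m.choose 2 := by
    have h1 : ∑ i ∈ Finset.range m, b i =
        (∑ i ∈ Finset.range m, Y.rowLen i) + ∑ i ∈ Finset.range m, (m - 1 - i) := by
      rw [← Finset.sum_add_distrib, hb]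
      rfl
    have h2 : ∑ i ∈ Finset.range m, (m - 1 - i) = ∑ i ∈ Finset.range m, i := by
      apply Finset.sum_nbij' (i := fun x => m - 1 - x) (j := fun x => m - 1 - x) <;>
        intros <;> simp_all [Finset.mem_range] <;> omega
    rw [h1, h2, ← card_eq_sum_rowLens' Y le_rfl, Finset.sum_range_id, Nat.choose_two_right]
  have hsumv : ∑ i ∈ Finset.range m, v i = (n : ℚ) + (m.choose 2 : ℚ) := by
    simp only [hv]
    rw [← Nat.cast_sum]
    exact_mod_cast congrArg (fun x : ℕ => (x : ℚ)) hsumb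
  have hTsum : ∑ r ∈ Finset.range m, T r = (n : ℚ) := by
    rw [hT]
    simp only
    rw [hlag, hsumv]
    ring
  -- final computation
  rw [Finset.sum_congr rfl hterm, ← Finset.mul_sum, hsum1, hTsum]
  rw [div_eq_mul_inv, hHinv]
  have hfac : ((n : ℚ)) * ((n - 1)! : ℚ) = (n ! : ℚ) := by
    exact_mod_cast congrArg (fun x : ℕ => (x : ℚ)) (Nat.mul_factorial_pred hn.ne')
  field_simp
  linarith [congrArg (fun x => x * DDq m v) hfac]

end HookAux

namespace HookAux

lemma degIrrep_eq (Y : YoungDiagram) : degIrrep Y = (Y.card)! / Hprod Y := rfl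

theorem hooks_dvd (Y : YoungDiagram) : Hprod Y ∣ (Y.card)! := by
  suffices h : ∀ n (Y : YoungDiagram), Y.card = n → Hprod Y ∣ (Y.card)! from h Y.card Y rfl
  intro n
  induction n using Nat.strong_induction_on with
  | _ n IH =>
    intro Y hcard
    rcases Nat.eq_zero_or_pos Y.card with h0 | hpos
    · have hcells : Y.cells = ∅ := Finset.card_eq_zero.mp h0
      rw [Hprod, hcells]
      simp
    · have hQ := branchQ Y hpos
      have hH0 : (Hprod Y : ℚ) ≠ 0 := by exact_mod_cast (Hprod_pos Y).ne'
      have hterm : ∀ r ∈ corners Y, ((Y.card - 1)! : ℚ) / (Hprod (rmCorner Y r) : ℚ) =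
          ((degIrrep (rmCorner Y r) : ℕ) : ℚ) := by
        intro r hr
        simp only [corners, Finset.mem_filter, Finset.mem_range] at hr
        have hcond := hr.2
        have hcz : (rmCorner Y r).card = Y.card - 1 := rmCorner_card hcond
        have hdvd := IH (Y.card - 1) (by omega) (rmCorner Y r) hcz
        have hHZ0 : ((Hprod (rmCorner Y r)) : ℚ) ≠ 0 := by
          exact_mod_cast (Hprod_pos (rmCorner Y r)).ne'
        rw [degIrrep_eq, Nat.cast_div (hcz ▸ hdvd) hHZ0, hcz]
      rw [Finset.sum_congr rfl hterm] at hQ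
      rw [div_eq_iff hH0] at hQ
      rw [← Nat.cast_sum] at hQ
      have hnat : (Y.card)! = (∑ r ∈ corners Y, degIrrep (rmCorner Y r)) * Hprod Y := by
        exact_mod_cast hQ
      exact Dvd.intro_left _ hnat.symm

theorem branchN (Y : YoungDiagram) (hpos : 0 < Y.card) :
    degIrrep Y = ∑ r ∈ corners Y, degIrrep (rmCorner Y r) := by
  have hH0 : (Hprod Y : ℚ) ≠ 0 := by exact_mod_cast (Hprod_pos Y).ne'
  have hQ := branchQ Y hpos
  have hterm : ∀ r ∈ corners Y, ((Y.card - 1)! : ℚ) / (Hprod (rmCorner Y r) : ℚ) =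
      ((degIrrep (rmCorner Y r) : ℕ) : ℚ) := by
    intro r hr
    simp only [corners, Finset.mem_filter, Finset.mem_range] at hr
    have hcond := hr.2
    have hcz : (rmCorner Y r).card = Y.card - 1 := rmCorner_card hcond
    have hdvd := hooks_dvd (rmCorner Y r)
    have hHZ0 : ((Hprod (rmCorner Y r)) : ℚ) ≠ 0 := by
      exact_mod_cast (Hprod_pos (rmCorner Y r)).ne'
    rw [degIrrep_eq, Nat.cast_div hdvd hHZ0, hcz]
  rw [Finset.sum_congr rfl hterm, ← Nat.cast_sum] at hQ
  have hcast : ((degIrrep Y : ℕ) : ℚ) =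
      ((∑ r ∈ corners Y, degIrrep (rmCorner Y r) : ℕ) : ℚ) := by
    rw [degIrrep_eq, Nat.cast_div (hooks_dvd Y) hH0]
    exact hQ
  exact_mod_cast hcast

end HookAux

/-- If `p` is prime and the degree of `ρ^λ` is prime to `p`, then some corner
cell of `λ` can be removed to give `μ ⊆ λ` with `|μ| = |λ| - 1` whose degree is
also prime to `p`. -/
theorem stmt12 (p : ℕ) (hp : p.Prime) (Y : YoungDiagram) (hn : 0 < Y.card)
    (hdeg : ¬ p ∣ degIrrep Y) :
    ∃ Z : YoungDiagram, Z.cells ⊆ Y.cells ∧ Z.card = Y.card - 1 ∧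
      ¬ p ∣ degIrrep Z := by
  by_contra hcon
  push_neg at hcon
  apply hdeg
  rw [HookAux.branchN Y hn]
  apply Finset.dvd_sum
  intro r hr
  simp only [HookAux.corners, Finset.mem_filter, Finset.mem_range] at hr
  exact hcon _ (HookAux.rmCorner_subset hr.2) (HookAux.rmCorner_card hr.2)
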